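/- Let P ⊂ ℝ^n be a reflexive lattice polytope. Suppose E ∈ ℝ[X] satisfies E(k) = #(kP ∩ ℤ^n) for every positive integer k, E(0) = 1, and the Ehrhart–Macdonald reciprocity E(−k) = (−1)^n · #(int(kP) ∩ ℤ^n) for every positive integer k. Then E(−k) = (−1)^n · E(k−1) for every positive integer k. -/

import Mathlib

open scoped BigOperators
open MeasureTheory Polynomial Filter

noncomputable section

/-- A point of `ℝ^n` is a lattice point if all its coordinates are integers. -/
def isLatticePoint (n : ℕ) (u : Fin n → ℝ) : Prop := ∀ i, ∃ z : ℤ, u i = (z : ℝ)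

/-- The set of lattice points of a subset `S ⊆ ℝ^n`. -/
def latticePts (n : ℕ) (S : Set (Fin n → ℝ)) : Set (Fin n → ℝ) :=
  {u ∈ S | isLatticePoint n u}

/-- The dilation `kS = {k • x : x ∈ S}`. -/
def dilate (n : ℕ) (k : ℕ) (S : Set (Fin n → ℝ)) : Set (Fin n → ℝ) :=
  (fun x => (k : ℝ) • x) '' S

/-- A lattice polytope: the convex hull of a nonempty finite set of lattice points. -/
def IsLatticePolytope (n : ℕ) (P : Set (Fin n → ℝ)) : Prop :=
  ∃ V : Finset (Fin n → ℝ), V.Nonempty ∧ (∀ v ∈ V, isLatticePoint n v) ∧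
    P = convexHull ℝ (V : Set (Fin n → ℝ))

/-- `P` is full-dimensional (`n`-dimensional) iff it has nonempty interior. -/
def IsFullDim (n : ℕ) (P : Set (Fin n → ℝ)) : Prop := (interior P).Nonempty

/-- The `k`-th quantized barycenter
`Bc_k(P) = (1/(k·#(kP ∩ ℤ^n))) · Σ_{u ∈ kP ∩ ℤ^n} u`. -/
def Bck (n k : ℕ) (P : Set (Fin n → ℝ)) : Fin n → ℝ :=
  ((k : ℝ) * ((latticePts n (dilate n k P)).ncard : ℝ))⁻¹ •
    ∑ᶠ u ∈ latticePts n (dilate n k P), u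

/-- The barycenter `Bc(P) = (∫_P x dx)/vol(P)`. -/
def Bc (n : ℕ) (P : Set (Fin n → ℝ)) : Fin n → ℝ :=
  fun i => (∫ x in P, x i) / (volume P).toReal

/-- `P` is reflexive w.r.t. the primitive integer vectors `v 1, …, v d`:
each `v i` has coordinates with gcd `1`, and
`P = ⋂ i {u : ⟨u, v i⟩ ≥ −1}`. -/
def IsReflexive (n d : ℕ) (v : Fin d → Fin n → ℤ) (P : Set (Fin n → ℝ)) : Prop :=
  (∀ i, Finset.univ.gcd (v i) = 1) ∧
    P = ⋂ i, {u : Fin n → ℝ | -1 ≤ ∑ j, u j * (v i j : ℝ)}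

/-- for a reflexive lattice polytope, the Ehrhart polynomial satisfies
`E(−k) = (−1)^n · E(k−1)` for every positive integer `k`, given Ehrhart–Macdonald
reciprocity as a hypothesis. -/
theorem reflexive_reciprocity
    (n d : ℕ) (v : Fin d → Fin n → ℤ) (P : Set (Fin n → ℝ))
    (hP : IsLatticePolytope n P) (hdim : IsFullDim n P)
    (href : IsReflexive n d v P)
    (E : Polynomial ℝ) (hE0 : E.eval 0 = 1)
    (hE : ∀ k : ℕ, 0 < k → E.eval (k : ℝ) = ((latticePts n (dilate n k P)).ncard : ℝ))
    (hrec : ∀ k : ℕ, 0 < k →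
      E.eval (-(k : ℝ))
        = (-1 : ℝ)^n * ((latticePts n (interior (dilate n k P))).ncard : ℝ)) :
    ∀ k : ℕ, 0 < k → E.eval (-(k : ℝ)) = (-1 : ℝ)^n * E.eval ((k : ℝ) - 1) := by
  classical
  obtain ⟨V, hVne, hVlat, hPV⟩ := hP
  obtain ⟨hprim, hPdef⟩ := href
  set f : Fin d → (Fin n → ℝ) → ℝ := fun i u => ∑ j, u j * (v i j : ℝ) with hf
  have hmem : ∀ u, u ∈ P ↔ ∀ i, -1 ≤ f i u := by
    intro u; rw [hPdef]; simp [Set.mem_iInter, hf]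
  have hfsmul : ∀ i (c : ℝ) (u), f i (c • u) = c * f i u := by
    intro i c u
    simp [hf, Finset.mul_sum, Pi.smul_apply, smul_eq_mul, mul_assoc]
  have hfsub : ∀ i (u w : Fin n → ℝ), f i (u - w) = f i u - f i w := by
    intro i u w
    simp [hf, sub_mul, Finset.sum_sub_distrib]
  have hfadd : ∀ i (u w : Fin n → ℝ), f i (u + w) = f i u + f i w := by
    intro i u w
    simp [hf, add_mul, Finset.sum_add_distrib]
  have hfcont : ∀ i, Continuous (f i) := by
    intro i
    exact continuous_finset_sum _ fun j _ => (continuous_apply j).mul continuous_const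
  have hvpos : ∀ i, 0 < f i (fun j => (v i j : ℝ)) := by
    intro i
    have hne : ∃ j, v i j ≠ 0 := by
      by_contra h
      push_neg at h
      have := hprim i
      rw [Finset.gcd_eq_zero_iff.mpr (fun j _ => h j)] at this
      exact absurd this (by norm_num)
    obtain ⟨j, hj⟩ := hne
    have heq : f i (fun j => (v i j : ℝ)) = ∑ j, ((v i j : ℝ))^2 := by
      simp [hf, sq]
    rw [heq]
    refine Finset.sum_pos' (fun j _ => sq_nonneg _) ⟨j, Finset.mem_univ j, ?_⟩
    have : ((v i j : ℝ)) ≠ 0 := Int.cast_ne_zero.mpr hj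
    positivity
  have hdil : ∀ (k : ℕ), 0 < k → ∀ u, u ∈ dilate n k P ↔ ∀ i, -(k:ℝ) ≤ f i u := by
    intro k hk u
    have hk' : (0:ℝ) < (k:ℝ) := Nat.cast_pos.mpr hk
    constructor
    · rintro ⟨x, hx, rfl⟩ i
      have h1 := (hmem x).1 hx i
      rw [hfsmul]
      nlinarith
    · intro h
      refine ⟨(k:ℝ)⁻¹ • u, ?_, ?_⟩
      · rw [hmem]
        intro i
        rw [hfsmul]
        have h2 := mul_le_mul_of_nonneg_left (h i) (le_of_lt (inv_pos.mpr hk'))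
        have h3 : (k:ℝ)⁻¹ * (-(k:ℝ)) = -1 := by field_simp
        linarith
      · show (k:ℝ) • ((k:ℝ)⁻¹ • u) = u
        rw [smul_smul, mul_inv_cancel₀ (ne_of_gt hk'), one_smul]
  have hopen : ∀ (k:ℕ), IsOpen {u : Fin n → ℝ | ∀ i, -(k:ℝ) < f i u} := by
    intro k
    have : {u : Fin n → ℝ | ∀ i, -(k:ℝ) < f i u} = ⋂ i, (f i) ⁻¹' Set.Ioi (-(k:ℝ)) := by
      ext u; simp [Set.mem_iInter]
    rw [this]
    exact isOpen_iInter_of_finite fun i => isOpen_Ioi.preimage (hfcont i)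
  have hsub : ∀ k : ℕ, 0 < k → {u : Fin n → ℝ | ∀ i, -(k:ℝ) < f i u} ⊆ interior (dilate n k P) := by
    intro k hk
    rw [(hopen k).subset_interior_iff]
    intro u hu
    exact (hdil k hk u).2 fun i => le_of_lt (hu i)
  have hint : ∀ k : ℕ, 0 < k → ∀ u, u ∈ interior (dilate n k P) → ∀ i, -(k:ℝ) < f i u := by
    intro k hk u hu i
    by_contra h
    push_neg at h
    have heq : f i u = -(k:ℝ) := le_antisymm h ((hdil k hk u).1 (interior_subset hu) i)
    set w : Fin n → ℝ := fun j => (v i j : ℝ) with hw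
    have htd : Filter.Tendsto (fun t : ℝ => u - t • w) (nhdsWithin 0 (Set.Ioi 0)) (nhds u) := by
      have hc : Continuous (fun t : ℝ => u - t • w) :=
        continuous_const.sub (continuous_id.smul continuous_const)
      have := hc.tendsto 0
      simp only [zero_smul, sub_zero] at this
      exact this.mono_left nhdsWithin_le_nhds
    have hev := htd.eventually (isOpen_interior.mem_nhds hu)
    obtain ⟨t, hmem', ht⟩ := (hev.and eventually_mem_nhdsWithin).exists
    have h1 : u - t • w ∈ dilate n k P := interior_subset hmem'
    have h2 := (hdil k hk _).1 h1 i
    rw [hfsub, hfsmul, heq] at h2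
    have ht' : (0:ℝ) < t := ht
    nlinarith [hvpos i]
  have hfint : ∀ u, isLatticePoint n u → ∀ i, ∃ m : ℤ, f i u = (m:ℝ) := by
    intro u hu i
    choose z hz using hu
    refine ⟨∑ j, z j * v i j, ?_⟩
    rw [hf]
    push_cast
    exact Finset.sum_congr rfl fun j _ => by rw [hz j]
  -- strict lattice inequality improves by one
  have hstep : ∀ (k : ℕ) u, isLatticePoint n u →
      ((∀ i, -(k:ℝ) < f i u) ↔ ∀ i, -(k:ℝ) + 1 ≤ f i u) := by
    intro k u hu
    constructor
    · intro h i
      obtain ⟨m, hm⟩ := hfint u hu i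
      have := h i
      rw [hm] at this ⊢
      have h1 : -(k:ℤ) < m := by exact_mod_cast this
      have h2 : -(k:ℤ) + 1 ≤ m := h1
      exact_mod_cast h2
    · intro h i
      linarith [h i]
  intro k hk
  rcases eq_or_lt_of_le (Nat.one_le_iff_ne_zero.mpr (Nat.pos_iff_ne_zero.mp hk)) with hk1 | hk2
  · -- k = 1
    have hk1' : k = 1 := hk1.symm
    subst hk1'
    have hset : latticePts n (interior (dilate n 1 P)) = {0} := by
      ext u
      simp only [latticePts, Set.mem_setOf_eq, Set.mem_singleton_iff]
      constructor
      · rintro ⟨hu, hlat⟩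
        have hpos : ∀ i, 0 ≤ f i u := by
          intro i
          obtain ⟨m, hm⟩ := hfint u hlat i
          have := hint 1 one_pos u hu i
          rw [hm] at this ⊢
          have h1 : -(1:ℤ) < m := by exact_mod_cast this
          have h2 : (0:ℤ) ≤ m := h1
          exact_mod_cast h2
        by_contra hne
        -- boundedness contradiction
        have hcpt : IsCompact P := by
          rw [hPV]
          exact V.finite_toSet.isCompact_convexHull ℝ
        obtain ⟨C, hC⟩ := hcpt.isBounded.exists_norm_le
        obtain ⟨p0, hp0⟩ := hVne
        have hp : p0 ∈ P := by
          rw [hPV]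
          exact subset_convexHull ℝ _ hp0
        have hunorm : (0:ℝ) < ‖u‖ := norm_pos_iff.mpr hne
        set t : ℝ := (C + ‖p0‖ + 1) / ‖u‖ with htdef
        have ht0 : 0 ≤ t := by
          have hC0 : 0 ≤ C := le_trans (norm_nonneg p0) (hC p0 hp)
          positivity
        have hmemP : p0 + t • u ∈ P := by
          rw [hmem]
          intro i
          rw [hfadd, hfsmul]
          have := (hmem p0).1 hp i
          nlinarith [hpos i]
        have hnorm1 : ‖t • u‖ ≤ ‖p0 + t • u‖ + ‖p0‖ := by
          have := norm_sub_le (p0 + t • u) p0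
          simpa using this
        have hnorm2 : ‖t • u‖ = t * ‖u‖ := by
          rw [norm_smul, Real.norm_eq_abs, abs_of_nonneg ht0]
        have hnorm3 : t * ‖u‖ = C + ‖p0‖ + 1 := by
          rw [htdef]
          field_simp
        have := hC _ hmemP
        rw [hnorm2, hnorm3] at hnorm1
        linarith
      · rintro rfl
        refine ⟨hsub 1 one_pos ?_, fun i => ⟨0, by simp⟩⟩
        intro i
        have : f i (0 : Fin n → ℝ) = 0 := by simp [hf]
        rw [this]
        norm_num
    rw [hrec 1 one_pos, hset, Set.ncard_singleton]
    norm_num [hE0]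
  · -- k ≥ 2
    have hk1 : 1 ≤ k - 1 := by omega
    have hkm : 0 < k - 1 := hk1
    have hset : latticePts n (interior (dilate n k P)) = latticePts n (dilate n (k-1) P) := by
      ext u
      simp only [latticePts, Set.mem_setOf_eq]
      constructor
      · rintro ⟨hu, hlat⟩
        refine ⟨(hdil (k-1) hkm u).2 ?_, hlat⟩
        intro i
        have h1 := (hstep k u hlat).1 (hint k hk u hu) i
        have hcast : -((k-1:ℕ):ℝ) = -(k:ℝ) + 1 := by
          rw [Nat.cast_sub (le_of_lt hk2)]
          push_cast
          ring
        rw [hcast]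
        exact h1
      · rintro ⟨hu, hlat⟩
        refine ⟨hsub k hk ?_, hlat⟩
        intro i
        have h1 := (hdil (k-1) hkm u).1 hu i
        have hcast : -((k-1:ℕ):ℝ) = -(k:ℝ) + 1 := by
          rw [Nat.cast_sub (le_of_lt hk2)]
          push_cast
          ring
        rw [hcast] at h1
        linarith
    rw [hrec k hk, hset, ← hE (k-1) hkm]
    congr 2
    rw [Nat.cast_sub (le_of_lt hk2)]
    push_cast
    ring
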